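/- Let G be a group, H ≤ G, A ≤ G with AH = G. If U, V are subgroups with H ≤ U, V ≤ G, then (U ∩ V) ∩ A = (U ∩ A) ∩ (V ∩ A) and ⟨U, V⟩ ∩ A = ⟨U ∩ A, V ∩ A⟩, where ⟨·,·⟩ denotes the subgroup generated. -/

import Mathlib

open scoped Pointwise

/-- For `G = AH` and subgroups `U, V` containing `H`, the map `W ↦ W ⊓ A`
respects intersections and joins. -/
theorem stmt_3 {G : Type*} [Group G] (H A U V : Subgroup G)
    (hAH : (A : Set G) * (H : Set G) = Set.univ)
    (hHU : H ≤ U) (hHV : H ≤ V) :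
    (U ⊓ V) ⊓ A = (U ⊓ A) ⊓ (V ⊓ A) ∧ (U ⊔ V) ⊓ A = (U ⊓ A) ⊔ (V ⊓ A) := by
  constructor
  · ext x
    simp only [Subgroup.mem_inf]
    tauto
  · set K := (U ⊓ A) ⊔ (V ⊓ A) with hKdef
    -- decomposition: any element of a subgroup W ≥ H factors as a·h, a ∈ W ⊓ A, h ∈ H
    have decomp : ∀ (W : Subgroup G), H ≤ W → ∀ w ∈ W,
        ∃ a ∈ W ⊓ A, ∃ h ∈ H, w = a * h := by
      intro W hHW w hw
      have hmem : w ∈ (A : Set G) * (H : Set G) := by rw [hAH]; trivial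
      obtain ⟨a, ha, h, hh, rfl⟩ := hmem
      refine ⟨a, ⟨?_, ha⟩, h, hh, rfl⟩
      have : a * h * h⁻¹ ∈ W := mul_mem hw (inv_mem (hHW hh))
      simpa using this
    have hKA : K ≤ A := sup_le inf_le_right inf_le_right
    -- swapping a single generator of K past H
    have swap1 : ∀ x : G, x ∈ ((↑(U ⊓ A) ∪ ↑(V ⊓ A) : Set G) ∪
        (↑(U ⊓ A) ∪ ↑(V ⊓ A) : Set G)⁻¹) → ∀ h ∈ H,
        ∃ a ∈ K, ∃ h' ∈ H, h * x = a * h' := by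
      intro x hx h hh
      have hx' : x ∈ U ⊓ A ∨ x ∈ V ⊓ A := by
        rcases hx with (h1 | h1) | hinv
        · exact Or.inl h1
        · exact Or.inr h1
        · rcases (Set.mem_inv.mp hinv) with h1 | h1
          · exact Or.inl (by simpa using inv_mem (show x⁻¹ ∈ U ⊓ A from h1))
          · exact Or.inr (by simpa using inv_mem (show x⁻¹ ∈ V ⊓ A from h1))
      rcases hx' with hx' | hx'
      · obtain ⟨a, ha, h', hh', heq⟩ := decomp U hHU (h * x) (mul_mem (hHU hh) hx'.1)
        exact ⟨a, le_sup_left (α := Subgroup G) ha, h', hh', heq⟩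
      · obtain ⟨a, ha, h', hh', heq⟩ := decomp V hHV (h * x) (mul_mem (hHV hh) hx'.1)
        exact ⟨a, le_sup_right (α := Subgroup G) ha, h', hh', heq⟩
    -- H·K ⊆ K·H
    have swap : ∀ k ∈ K, ∀ h ∈ H, ∃ a ∈ K, ∃ h' ∈ H, h * k = a * h' := by
      intro k hk
      have hk' : k ∈ Submonoid.closure ((↑(U ⊓ A) ∪ ↑(V ⊓ A) : Set G) ∪
          (↑(U ⊓ A) ∪ ↑(V ⊓ A) : Set G)⁻¹) := by
        rw [← Subgroup.closure_toSubmonoid, Subgroup.mem_toSubmonoid,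
          Subgroup.closure_union, Subgroup.closure_eq, Subgroup.closure_eq]
        exact hk
      obtain ⟨l, hl, rfl⟩ := Submonoid.exists_list_of_mem_closure hk'
      clear hk hk'
      induction l with
      | nil => intro h hh; exact ⟨1, one_mem K, h, hh, by simp⟩
      | cons x l ih =>
        intro h hh
        obtain ⟨a, ha, h1, hh1, heq1⟩ := swap1 x (hl x List.mem_cons_self) h hh
        obtain ⟨a2, ha2, h2, hh2, heq2⟩ :=
          ih (fun y hy => hl y (List.mem_cons_of_mem x hy)) h1 hh1
        refine ⟨a * a2, mul_mem ha ha2, h2, hh2, ?_⟩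
        calc h * (x :: l).prod = (h * x) * l.prod := by rw [List.prod_cons]; group
        _ = a * (h1 * l.prod) := by rw [heq1]; group
        _ = a * a2 * h2 := by rw [heq2]; group
    -- every element of U ⊔ V is k·h
    have main : ∀ g ∈ U ⊔ V, ∃ k ∈ K, ∃ h ∈ H, g = k * h := by
      intro g hg
      have hg' : g ∈ Submonoid.closure ((↑U ∪ ↑V : Set G) ∪ (↑U ∪ ↑V : Set G)⁻¹) := by
        rw [← Subgroup.closure_toSubmonoid, Subgroup.mem_toSubmonoid,
          Subgroup.closure_union, Subgroup.closure_eq, Subgroup.closure_eq]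
        exact hg
      obtain ⟨l, hl, rfl⟩ := Submonoid.exists_list_of_mem_closure hg'
      clear hg hg'
      induction l with
      | nil => exact ⟨1, one_mem K, 1, one_mem H, by simp⟩
      | cons x l ih =>
        have hx : x ∈ U ∨ x ∈ V := by
          rcases hl x List.mem_cons_self with (h1 | h1) | hinv
          · exact Or.inl h1
          · exact Or.inr h1
          · rcases (Set.mem_inv.mp hinv) with h1 | h1
            · exact Or.inl (by simpa using inv_mem (show x⁻¹ ∈ U from h1))
            · exact Or.inr (by simpa using inv_mem (show x⁻¹ ∈ V from h1))
        have hxdec : ∃ a ∈ K, ∃ h ∈ H, x = a * h := by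
          rcases hx with hx | hx
          · obtain ⟨a, ha, h, hh, heq⟩ := decomp U hHU x hx
            exact ⟨a, le_sup_left (α := Subgroup G) ha, h, hh, heq⟩
          · obtain ⟨a, ha, h, hh, heq⟩ := decomp V hHV x hx
            exact ⟨a, le_sup_right (α := Subgroup G) ha, h, hh, heq⟩
        obtain ⟨a, ha, h, hh, heq⟩ := hxdec
        obtain ⟨k2, hk2, h2, hh2, heq2⟩ := ih (fun y hy => hl y (List.mem_cons_of_mem x hy))
        obtain ⟨a3, ha3, h3, hh3, heq3⟩ := swap k2 hk2 h hh
        refine ⟨a * a3, mul_mem ha ha3, h3 * h2, mul_mem hh3 hh2, ?_⟩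
        calc (x :: l).prod = x * l.prod := List.prod_cons
        _ = (a * h) * (k2 * h2) := by rw [heq, heq2]
        _ = a * (h * k2) * h2 := by group
        _ = a * a3 * (h3 * h2) := by rw [heq3]; group
    refine le_antisymm ?_ ?_
    · rintro x ⟨hxUV, hxA⟩
      obtain ⟨k, hk, h, hh, rfl⟩ := main x hxUV
      have hhA : h ∈ A := by
        have : k⁻¹ * (k * h) ∈ A := mul_mem (inv_mem (hKA hk)) hxA
        simpa using this
      have : h ∈ K := le_sup_left (α := Subgroup G) (⟨hHU hh, hhA⟩ : h ∈ U ⊓ A)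
      exact mul_mem hk this
    · exact le_inf (sup_le (inf_le_left.trans le_sup_left)
        (inf_le_left.trans le_sup_right)) hKA
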